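/- Variable allocation for a list succeeds: if state s is well-formed and the list of variables x₁:τ₁, …, xₙ:τₙ has pairwise distinct names, then one can allocate fresh locations l₁, …, lₙ of sizes size(τᵢ), extend the variable environment with bindings xᵢ ↦ (lᵢ, τᵢ), and the resulting state is well-formed (with respect to the store typing extended by lᵢ ↦ τᵢ* and the typing context extended by xᵢ ↦ τᵢ). -/

import Mathlib

/-- Types. -/
inductive Ty : Type
  | int | bool | unit
  | ptr : Ty → Ty
deriving DecidableEq

/-- Values. -/
inductive Val : Type
  | intV : Int → Val
  | boolV : Bool → Val
  | unitV : Val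
  | locV : Nat → Val
deriving DecidableEq

/-- Access permissions (CompCert-style), ordered with `Freeable` maximal. -/
inductive Perm : Type
  | nonempty | readable | writable | freeable
deriving DecidableEq

def Perm.toNat : Perm → Nat
  | .nonempty => 0
  | .readable => 1
  | .writable => 2
  | .freeable => 3

/-- Permission order. -/
def Perm.le (p q : Perm) : Prop := p.toNat ≤ q.toNat

/-- CompCert-style memory: contents, permissions, and a fresh-block counter. -/
structure Mem where
  contents : Nat → Option Val
  perm : Nat → Option Perm
  next : Nat

/-- `isValidAccess Θ l p`: `l` is an allocated address of `Θ` whose permission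
is at least `p`. -/
def isValidAccess (Θ : Mem) (l : Nat) (p : Perm) : Prop :=
  ∃ q, Θ.perm l = some q ∧ Perm.le p q

/-- Value typing relative to a store typing `Σ` (a location `l` has type
`τ*` when `Σ l = some τ`). -/
def ValHasTy (St : Nat → Option Ty) : Val → Ty → Prop
  | .intV _, .int => True
  | .boolV _, .bool => True
  | .unitV, .unit => True
  | .locV l, .ptr τ => St l = some τ
  | _, _ => False

/-- Store the value `v` at location `l`. -/
def setMem (Θ : Mem) (l : Nat) (v : Val) : Mem :=
  { Θ with contents := fun l' => if l' = l then some v else Θ.contents l' }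

/-- Allocate a fresh block (the bounds `lo`, `hi` delimit its size);
allocation is total and returns the fresh location. -/
def alloc (Θ : Mem) (_lo _hi : Int) : Mem × Nat :=
  ({ contents := Θ.contents,
     perm := fun l => if l = Θ.next then some Perm.freeable else Θ.perm l,
     next := Θ.next + 1 }, Θ.next)

/-- Program states: globals Δ, variable environment Ω, memory Θ. -/
structure State where
  glob : String → Option Nat
  env : String → Option (Nat × Ty)
  mem : Mem

/-- Extend a store typing. -/
def updSt (St : Nat → Option Ty) (l : Nat) (τ : Ty) : Nat → Option Ty :=
  fun l' => if l' = l then some τ else St l'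

/-- Extend a typing context. -/
def updTC (Γ : String → Option Ty) (x : String) (τ : Ty) : String → Option Ty :=
  fun y => if y = x then some τ else Γ y

/-- Extend a variable environment. -/
def updEnv (Ω : String → Option (Nat × Ty)) (x : String) (l : Nat) (τ : Ty) :
    String → Option (Nat × Ty) :=
  fun y => if y = x then some (l, τ) else Ω y

/-- Byte size of a type. -/
def sizeTy : Ty → Int
  | .int => 8
  | .bool => 1
  | .unit => 1
  | .ptr _ => 8

/-- Well-formed states (bindings of `Γ`-variables are well-typed locations,
`Σ`-locations are valid, and blocks above the counter are fresh). -/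
def WFState (Γ : String → Option Ty) (St : Nat → Option Ty) (s : State) : Prop :=
  (∀ x τ, Γ x = some τ →
      ∃ l, (s.env x = some (l, τ) ∨ s.glob x = some l) ∧ St l = some τ) ∧
  (∀ l τ, St l = some τ → isValidAccess s.mem l Perm.freeable) ∧
  (∀ l, s.mem.next ≤ l → s.mem.perm l = none ∧ s.mem.contents l = none)

/-- Allocate fresh locations for a list of typed variables, extending the
variable environment as we go, and return the list of fresh locations. -/
def allocVars : State → List (String × Ty) → State × List Nat
  | s, [] => (s, [])
  | s, (x, τ) :: rest =>
      let p := alloc s.mem 0 (sizeTy τ)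
      let s' : State := { s with mem := p.1, env := updEnv s.env x p.2 τ }
      let q := allocVars s' rest
      (q.1, p.2 :: q.2)

/-- Extend a typing context by a list of typed variables. -/
def extTC (Γ : String → Option Ty) (xs : List (String × Ty)) : String → Option Ty :=
  xs.foldl (fun Γ p => updTC Γ p.1 p.2) Γ

/-- Extend a store typing by a list of typed locations. -/
def extSt (St : Nat → Option Ty) (ps : List (Nat × Ty)) : Nat → Option Ty :=
  ps.foldl (fun St p => updSt St p.1 p.2) St

/-- variable allocation for a list succeeds.  If the names are
pairwise distinct, fresh locations can be allocated for all variables and the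
resulting state is well-formed with respect to the extended typing context
and the extended store typing. -/
theorem allocVars_succeeds
    (Γ : String → Option Ty) (St : Nat → Option Ty) (s : State)
    (xs : List (String × Ty))
    (hwf : WFState Γ St s)
    (hnodup : (xs.map Prod.fst).Nodup) :
    ∃ (s' : State) (ls : List Nat),
      allocVars s xs = (s', ls) ∧ ls.length = xs.length ∧
      WFState (extTC Γ xs) (extSt St (ls.zip (xs.map Prod.snd))) s' := by
  clear hnodup
  induction xs generalizing Γ St s with
  | nil =>
      exact ⟨s, [], rfl, rfl, hwf⟩
  | cons p rest ih =>
      obtain ⟨x, τ⟩ := p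
      set l := s.mem.next with hl
      set s₁ : State :=
        { s with mem := (alloc s.mem 0 (sizeTy τ)).1,
                 env := updEnv s.env x l τ } with hs₁
      obtain ⟨h1, h2, h3⟩ := hwf
      have hwf1 : WFState (updTC Γ x τ) (updSt St l τ) s₁ := by
        refine ⟨?_, ?_, ?_⟩
        · intro y σ hy
          by_cases hyx : y = x
          · subst hyx
            have hy' : τ = σ := by simpa [updTC] using hy
            refine ⟨l, Or.inl ?_, ?_⟩
            · simp [hs₁, updEnv, hy'.symm]
            · simp [updSt, hy'.symm]
          · simp only [updTC, if_neg hyx] at hy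
            obtain ⟨l', hloc, hst⟩ := h1 y σ hy
            have hne : l' ≠ l := by
              intro h
              obtain ⟨q, hq, _⟩ := h2 l' σ hst
              have := (h3 l (le_refl _)).1
              rw [h, this] at hq; cases hq
            refine ⟨l', ?_, by simp [updSt, hne, hst]⟩
            rcases hloc with h | h
            · exact Or.inl (by simp [hs₁, updEnv, hyx, h])
            · exact Or.inr h
        · intro l' σ hst
          by_cases hne : l' = l
          · subst hne
            exact ⟨Perm.freeable, by simp [hs₁, alloc, ← hl], le_refl _⟩
          · simp only [updSt, if_neg hne] at hst
            obtain ⟨q, hq, hle⟩ := h2 l' σ hst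
            exact ⟨q, by simp [hs₁, alloc, ← hl, hne, hq], hle⟩
        · intro l' hle
          have hle' : s.mem.next ≤ l' := by
            simp only [hs₁, alloc] at hle; omega
          have hne : l' ≠ l := by
            simp only [hs₁, alloc] at hle; omega
          obtain ⟨hp, hc⟩ := h3 l' hle'
          exact ⟨by simp [hs₁, alloc, ← hl, hne, hp], by simp [hs₁, alloc, hc]⟩
      obtain ⟨s', ls, heq, hlen, hwf'⟩ := ih (updTC Γ x τ) (updSt St l τ) s₁ hwf1
      refine ⟨s', l :: ls, ?_, by simp [hlen], ?_⟩
      · have hformat : allocVars s ((x, τ) :: rest) =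
            ((allocVars s₁ rest).1, l :: (allocVars s₁ rest).2) := rfl
        rw [hformat, heq]
      · simpa [extTC, extSt] using hwf'
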